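/- Let A ⊆ {1,…,n}, f = ∏_{i∈A} x_i, and P a monomial prime ideal of S_f with f ∉ P. Then for any a ∈ ℕ^n with a(j) = 0 for j ∈ A, the Hilbert series of the shifted module satisfies H_{(S_f/P)(-a)}(t) = Q(t)·(1+t)^{|A|}/(1-t)^{d'} where d' = dim S_f/P and Q(t) is a polynomial with Q(1) = 1. Consequently, if J ⊂ I ⊂ S_f are monomial ideals, then H_{I/J}(t) = Q̃(t)/(1-t)^d with d = dim I/J and Q̃(1) = k·2^{|A|}, where k is the number of factors (S_f/P_i)(-a_i) with dim S_f/P_i = d in a prime filtration of I/J as above. -/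

import Mathlib

/-!
Combinatorial model of the localized polynomial ring `S_f`, where
`S = K[x_1, …, x_n]`, `A ⊆ {1, …, n}` and `f = ∏_{j ∈ A} x_j`.

Since all the `ℤⁿ`-graded components of `S_f` are at most one-dimensional over `K`,
monomial `K`-subspaces of `S_f` (in particular monomial ideals, Stanley spaces and
modules `I/J`) are faithfully encoded by their sets of exponent vectors `a : Fin n → ℤ`,
direct sum decompositions into monomial subspaces correspond exactly to partitions of
the exponent sets, and (for those sets `Z` considered here) `u·K[Z]` is automatically a
free `K[Z]`-module.
-/

/-- Exponent vectors of the monomials of `S_f`: all `a : ℤⁿ` with `a j ≥ 0` for `j ∉ A`. -/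
def SfMon {n : ℕ} (A : Finset (Fin n)) : Set (Fin n → ℤ) :=
  {a | ∀ j, j ∉ A → 0 ≤ a j}

/-- `M` is the set of exponent vectors of the monomials of a monomial ideal of `S_f`
(for `A = ∅` this is a monomial ideal of the polynomial ring `S` itself). -/
def IsMonomialIdeal {n : ℕ} (A : Finset (Fin n)) (M : Set (Fin n → ℤ)) : Prop :=
  M ⊆ SfMon A ∧ ∀ a ∈ M, ∀ c ∈ SfMon A, a + c ∈ M

/-- Admissible sets of "variables" for Stanley spaces in `S_f`: `(i, true)` stands for
`x i` and `(i, false)` for `x i⁻¹`; inverse variables exist only for `i ∈ A`, and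
`{x i, x i⁻¹} ⊄ Z`. -/
def ZOk {n : ℕ} (A : Finset (Fin n)) (Z : Finset (Fin n × Bool)) : Prop :=
  (∀ i : Fin n, (i, false) ∈ Z → i ∈ A) ∧
  ∀ i : Fin n, ¬((i, true) ∈ Z ∧ (i, false) ∈ Z)

/-- Exponent vectors of the monomials of the Stanley space `u·K[Z]`. -/
def stanleySet {n : ℕ} (u : Fin n → ℤ) (Z : Finset (Fin n × Bool)) : Set (Fin n → ℤ) :=
  {a | ∀ i : Fin n, ((i, true) ∈ Z → u i ≤ a i) ∧ ((i, false) ∈ Z → a i ≤ u i) ∧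
      ((i, true) ∉ Z → (i, false) ∉ Z → a i = u i)}

/-- The family of Stanley spaces `u i · K[Z i]` is a Stanley decomposition of the
monomial `K`-vector space whose monomials have exponent vectors in `M`. -/
def IsStanleyDecompOn {n : ℕ} (A : Finset (Fin n)) (M : Set (Fin n → ℤ)) {ι : Type}
    (u : ι → Fin n → ℤ) (Z : ι → Finset (Fin n × Bool)) : Prop :=
  Finite ι ∧ (∀ i, ZOk A (Z i)) ∧
  Pairwise (fun i j : ι => Disjoint (stanleySet (u i) (Z i)) (stanleySet (u j) (Z j))) ∧
  (⋃ i, stanleySet (u i) (Z i)) = M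

/-- Stanley depth of the monomial `K`-space with exponent set `M` (value `⊤` for `M = ∅`). -/
noncomputable def sdepth {n : ℕ} (A : Finset (Fin n)) (M : Set (Fin n → ℤ)) : ℕ∞ :=
  sSup {k : ℕ∞ | ∃ (r : ℕ) (u : Fin r → Fin n → ℤ) (Z : Fin r → Finset (Fin n × Bool)),
    IsStanleyDecompOn A M u Z ∧ ∀ i, k ≤ ((Z i).card : ℕ∞)}

/-- The exponent vector of `f = ∏_{j ∈ A} x_j`. -/
def fVec {n : ℕ} (A : Finset (Fin n)) : Fin n → ℤ := fun i => if i ∈ A then 1 else 0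

/-- Localization at `f` of a monomial ideal (given by its set of exponent vectors). -/
def locSet {n : ℕ} (A : Finset (Fin n)) (M : Set (Fin n → ℤ)) : Set (Fin n → ℤ) :=
  {b ∈ SfMon A | ∃ k : ℕ, b + (k : ℤ) • fVec A ∈ M}

/-- `|a| = Σ_i |a_i|`, the degree used for the Hilbert series. -/
def degAbs {n : ℕ} (a : Fin n → ℤ) : ℕ := ∑ i, (a i).natAbs

/-- The Hilbert series `H_M(t) = Σ_d H(M,d) t^d`, `H(M,d) = #{a ∈ M : |a| = d}`, of the
`ℤⁿ`-graded `K`-vector space with monomial exponent set `M`. -/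
noncomputable def hilbSeries {n : ℕ} (M : Set (Fin n → ℤ)) : PowerSeries ℚ :=
  PowerSeries.mk fun d => (({a ∈ M | degAbs a = d}).ncard : ℚ)

/-- A prime filtration `J = N 0 ⊂ N 1 ⊂ … ⊂ N r = I` of `I/J` by monomial ideals of `S_f`,
with `i`-th factor isomorphic, as a `ℤⁿ`-graded module, to `(S_f/P_{B i})(-a i)`, where
`P_B` is the monomial prime ideal generated by the variables `x j`, `j ∈ B`. -/
def IsPrimeFiltration {n : ℕ} (A : Finset (Fin n)) (J I : Set (Fin n → ℤ)) (r : ℕ)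
    (N : Fin (r + 1) → Set (Fin n → ℤ)) (B : Fin r → Finset (Fin n))
    (a : Fin r → Fin n → ℤ) : Prop :=
  N 0 = J ∧ N (Fin.last r) = I ∧
  (∀ i : Fin (r + 1), IsMonomialIdeal A (N i)) ∧
  (∀ i : Fin r, N i.castSucc ⊂ N i.succ) ∧
  (∀ i : Fin r, ∀ j ∈ A, j ∉ B i) ∧
  (∀ i : Fin r, ∀ j, 0 ≤ a i j) ∧
  (∀ i : Fin r, ∀ j ∈ A, a i j = 0) ∧
  (∀ i : Fin r, N i.succ \ N i.castSucc =
    {b | ∃ c ∈ SfMon A, (∀ j ∈ B i, c j = 0) ∧ b = a i + c})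

/-- `fdepth` of `I/J` (value `⊤` for `I = J`); `dim S_f/P_B = n - |B|`. -/
noncomputable def fdepth {n : ℕ} (A : Finset (Fin n)) (J I : Set (Fin n → ℤ)) : ℕ∞ :=
  sSup {k : ℕ∞ | ∃ (r : ℕ) (N : Fin (r + 1) → Set (Fin n → ℤ)) (B : Fin r → Finset (Fin n))
      (a : Fin r → Fin n → ℤ), IsPrimeFiltration A J I r N B a ∧
      ∀ i, k ≤ ((n - (B i).card : ℕ) : ℕ∞)}

/-- The set of exponent vectors of the monomials of the colon ideal `(J :_{S_f} I)`,
which is the annihilator of `I/J`. -/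
def colonSet {n : ℕ} (A : Finset (Fin n)) (I J : Set (Fin n → ℤ)) : Set (Fin n → ℤ) :=
  {c ∈ SfMon A | ∀ a ∈ I, a + c ∈ J}

/-- The monomial prime `P_B·S_f` contains the monomial ideal with exponent set `Q`. -/
def primeContainsIdeal {n : ℕ} (B : Finset (Fin n)) (Q : Set (Fin n → ℤ)) : Prop :=
  ∀ c ∈ Q, ∃ j ∈ B, 1 ≤ c j

/-- `P_B·S_f` is a minimal prime ideal of the module `I/J`, i.e. a prime of `S_f`
(so `B ∩ A = ∅`) minimal among those containing `ann(I/J) = (J : I)`. -/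
def IsMinimalPrimeOf {n : ℕ} (A B : Finset (Fin n)) (I J : Set (Fin n → ℤ)) : Prop :=
  (∀ j ∈ A, j ∉ B) ∧ primeContainsIdeal B (colonSet A I J) ∧
  ∀ B' ⊆ B, primeContainsIdeal B' (colonSet A I J) → B' = B

noncomputable def coordSeries (T : Set ℤ) : PowerSeries ℚ :=
  PowerSeries.mk fun d => (({s ∈ T | s.natAbs = d}).ncard : ℚ)

lemma finite_absSlice (T : Set ℤ) (d : ℕ) : {s ∈ T | s.natAbs = d}.Finite := by
  apply Set.Finite.subset (((Set.finite_singleton (-(d:ℤ))).insert (d:ℤ)))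
  rintro s ⟨-, h⟩
  simp only [Set.mem_insert_iff, Set.mem_singleton_iff]
  omega

lemma finite_degSlice {n : ℕ} (d : ℕ) : {a : Fin n → ℤ | degAbs a = d}.Finite := by
  apply Set.Finite.subset (Set.Finite.pi (fun _ : Fin n => Set.finite_Icc (-(d:ℤ)) d))
  intro a ha
  simp only [Set.mem_pi, Set.mem_univ, Set.mem_Icc, forall_true_left]
  intro i
  have : (a i).natAbs ≤ d := by
    rw [← ha]
    exact Finset.single_le_sum (f := fun i => (a i).natAbs) (fun _ _ => Nat.zero_le _)
      (Finset.mem_univ i)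
  omega

lemma finite_mSlice {n : ℕ} (M : Set (Fin n → ℤ)) (d : ℕ) :
    {a ∈ M | degAbs a = d}.Finite :=
  (finite_degSlice d).subset fun _ h => h.2

lemma ncard_biUnion' {α ι : Type*} (s : Finset ι) (f : ι → Set α)
    (hf : ∀ i ∈ s, (f i).Finite)
    (hd : ∀ i ∈ s, ∀ j ∈ s, i ≠ j → Disjoint (f i) (f j)) :
    (⋃ i ∈ s, f i).ncard = ∑ i ∈ s, (f i).ncard := by
  classical
  induction s using Finset.induction with
  | empty => simp
  | @insert x s hx ih =>
    rw [Finset.sum_insert hx, Finset.set_biUnion_insert]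
    rw [Set.ncard_union_eq ?_ (hf x (Finset.mem_insert_self x s)) ?_]
    · rw [ih (fun i hi => hf i (Finset.mem_insert_of_mem hi))
        (fun i hi j hj hij => hd i (Finset.mem_insert_of_mem hi) j
          (Finset.mem_insert_of_mem hj) hij)]
    · rw [Set.disjoint_iUnion₂_right]
      intro i hi
      exact hd x (Finset.mem_insert_self x s) i (Finset.mem_insert_of_mem hi)
        (by rintro rfl; exact hx hi)
    · exact Set.Finite.biUnion s.finite_toSet
        (fun i hi => hf i (Finset.mem_insert_of_mem hi))

lemma ncard_prod' {α β : Type*} (s : Set α) (t : Set β) :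
    (s ×ˢ t).ncard = s.ncard * t.ncard := by
  rw [← Nat.card_coe_set_eq, ← Nat.card_coe_set_eq, ← Nat.card_coe_set_eq,
    ← Nat.card_prod]
  exact Nat.card_congr (Equiv.Set.prod s t)

lemma degAbs_succ {n : ℕ} (a : Fin (n + 1) → ℤ) :
    degAbs a = (a 0).natAbs + degAbs (Fin.tail a) := by
  simp [degAbs, Fin.sum_univ_succ, Fin.tail]

lemma key_count {n : ℕ} (T : Set ℤ) (M : Set (Fin n → ℤ)) (d : ℕ) :
    {a : Fin (n + 1) → ℤ | (a 0 ∈ T ∧ Fin.tail a ∈ M) ∧ degAbs a = d}.ncard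
      = ∑ p ∈ Finset.HasAntidiagonal.antidiagonal d,
          ({s ∈ T | s.natAbs = p.1}).ncard * ({x ∈ M | degAbs x = p.2}).ncard := by
  classical
  have hinj : Function.Injective
      (fun a : Fin (n + 1) → ℤ => ((a 0, Fin.tail a) : ℤ × (Fin n → ℤ))) := by
    intro a b h
    have h1 : a 0 = b 0 := congrArg Prod.fst h
    have h2 : Fin.tail a = Fin.tail b := congrArg Prod.snd h
    rw [← Fin.cons_self_tail a, ← Fin.cons_self_tail b, h1, h2]
  have himg : (fun a : Fin (n + 1) → ℤ => ((a 0, Fin.tail a) : ℤ × (Fin n → ℤ))) ''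
      {a | (a 0 ∈ T ∧ Fin.tail a ∈ M) ∧ degAbs a = d}
      = ⋃ p ∈ Finset.HasAntidiagonal.antidiagonal d,
          ({s ∈ T | s.natAbs = p.1} ×ˢ {x ∈ M | degAbs x = p.2}) := by
    ext ⟨s, x⟩
    simp only [Set.mem_image, Set.mem_iUnion, Set.mem_prod, Set.mem_setOf_eq,
      Finset.HasAntidiagonal.mem_antidiagonal]
    constructor
    · rintro ⟨a, ⟨⟨h1, h2⟩, h3⟩, h4⟩
      obtain ⟨rfl, rfl⟩ : a 0 = s ∧ Fin.tail a = x :=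
        ⟨congrArg Prod.fst h4, congrArg Prod.snd h4⟩
      exact ⟨((a 0).natAbs, degAbs (Fin.tail a)), by rw [← degAbs_succ]; exact h3,
        ⟨h1, rfl⟩, ⟨h2, rfl⟩⟩
    · rintro ⟨⟨p1, p2⟩, hp, ⟨hs, rfl⟩, hx, rfl⟩
      refine ⟨Fin.cons s x, ⟨⟨?_, ?_⟩, ?_⟩, ?_⟩
      · simpa using hs
      · simpa [Fin.tail_cons] using hx
      · rw [degAbs_succ]; simpa [Fin.tail_cons] using hp
      · simp [Fin.tail_cons]
  rw [← Set.ncard_image_of_injective _ hinj, himg, ncard_biUnion']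
  · exact Finset.sum_congr rfl fun p _ => ncard_prod' _ _
  · exact fun p _ => (finite_absSlice T p.1).prod (finite_mSlice M p.2)
  · rintro ⟨p1, p2⟩ hp ⟨q1, q2⟩ hq hne
    rw [Set.disjoint_left]
    rintro ⟨s, x⟩ ⟨⟨-, h1⟩, -, h2⟩ ⟨⟨-, h3⟩, -, h4⟩
    simp only [Finset.HasAntidiagonal.mem_antidiagonal] at hp hq
    exact hne (by simp only [Prod.mk.injEq]; omega)

lemma hilbSeries_cons {n : ℕ} (T : Set ℤ) (M : Set (Fin n → ℤ)) :
    hilbSeries {b : Fin (n + 1) → ℤ | b 0 ∈ T ∧ (Fin.tail b : Fin n → ℤ) ∈ M}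
      = coordSeries T * hilbSeries M := by
  ext d
  rw [PowerSeries.coeff_mul]
  simp only [hilbSeries, coordSeries, PowerSeries.coeff_mk, Set.mem_setOf_eq]
  rw [key_count T M d]
  push_cast
  rfl

lemma hilbSeries_box : ∀ {n : ℕ} (S : Fin n → Set ℤ),
    hilbSeries {b : Fin n → ℤ | ∀ i, b i ∈ S i} = ∏ i, coordSeries (S i) := by
  intro n
  induction n with
  | zero =>
    intro S
    ext d
    have h0 : ∀ a : Fin 0 → ℤ, degAbs a = 0 := fun a => by simp [degAbs]
    have huniv : ∀ a : Fin 0 → ℤ, a ∈ {b : Fin 0 → ℤ | ∀ i, b i ∈ S i} := by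
      intro a i; exact i.elim0
    rcases d with _ | d
    · simp only [Finset.univ_eq_empty, Finset.prod_empty, hilbSeries, PowerSeries.coeff_mk,
        PowerSeries.coeff_one]
      have : {a : Fin 0 → ℤ | a ∈ {b | ∀ i, b i ∈ S i} ∧ degAbs a = 0} = Set.univ := by
        ext a; simp [h0 a, huniv a]
      rw [this, Set.ncard_univ, Nat.card_eq_one_iff_unique.mpr ⟨inferInstance, inferInstance⟩]
      norm_num
    · simp only [Finset.univ_eq_empty, Finset.prod_empty, hilbSeries, PowerSeries.coeff_mk,
        PowerSeries.coeff_one]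
      have : {a : Fin 0 → ℤ | a ∈ {b | ∀ i, b i ∈ S i} ∧ degAbs a = d + 1} = ∅ := by
        ext a; simp [h0 a]
      rw [this, Set.ncard_empty]
      norm_num
  | succ n ih =>
    intro S
    have : {b : Fin (n+1) → ℤ | ∀ i, b i ∈ S i}
        = {b : Fin (n+1) → ℤ | b 0 ∈ S 0 ∧
            (Fin.tail b : Fin n → ℤ) ∈ ({x : Fin n → ℤ | ∀ i, x i ∈ S i.succ} : Set (Fin n → ℤ))} := by
      ext b
      simp only [Set.mem_setOf_eq, Fin.forall_fin_succ, Fin.tail]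
    rw [this, hilbSeries_cons, ih, Fin.prod_univ_succ]

open PowerSeries in
lemma coordSeries_univ_mul :
    coordSeries (Set.univ : Set ℤ) * (1 - PowerSeries.X) = 1 + PowerSeries.X := by
  have hc : ∀ d : ℕ, ({s ∈ (Set.univ : Set ℤ) | s.natAbs = d}).ncard
      = if d = 0 then 1 else 2 := by
    intro d
    rcases Nat.eq_zero_or_pos d with rfl | hd
    · rw [if_pos rfl, show {s ∈ (Set.univ : Set ℤ) | s.natAbs = 0} = {0} by ext s; simp]
      exact Set.ncard_singleton 0
    · rw [if_neg (by omega), show {s ∈ (Set.univ : Set ℤ) | s.natAbs = d} = {(d : ℤ), -(d:ℤ)} by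
        ext s; simp; omega]
      exact Set.ncard_pair (by omega)
  ext d
  rw [mul_sub, mul_one, map_sub, map_add]
  rcases d with _ | d
  · simp [coordSeries, coeff_mk, hc 0, PowerSeries.coeff_zero_eq_constantCoeff]
  · rw [coeff_succ_mul_X]
    simp only [coordSeries, coeff_mk, hc, PowerSeries.coeff_one, PowerSeries.coeff_X]
    rcases d with _ | d <;> norm_num

open PowerSeries in
lemma coordSeries_Ici_mul (m : ℕ) :
    coordSeries (Set.Ici (m : ℤ)) * (1 - PowerSeries.X) = PowerSeries.X ^ m := by
  have hc : ∀ d : ℕ, ({s ∈ Set.Ici (m : ℤ) | s.natAbs = d}).ncard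
      = if m ≤ d then 1 else 0 := by
    intro d
    rcases le_or_gt m d with h | h
    · rw [if_pos h, show {s ∈ Set.Ici (m : ℤ) | s.natAbs = d} = {(d : ℤ)} by
        ext s; simp [Set.mem_Ici]; omega]
      exact Set.ncard_singleton _
    · rw [if_neg (by omega), show {s ∈ Set.Ici (m : ℤ) | s.natAbs = d} = ∅ by
        ext s; simp [Set.mem_Ici]; omega]
      exact Set.ncard_empty _
  ext d
  rw [mul_sub, mul_one, map_sub, PowerSeries.coeff_X_pow]
  rcases d with _ | d
  · rw [coeff_zero_mul_X]
    simp only [coordSeries, coeff_mk, hc]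
    rcases Nat.eq_zero_or_pos m with rfl | hm
    · norm_num
    · rw [if_neg (by omega), if_neg (by omega)]; norm_num
  · rw [coeff_succ_mul_X]
    simp only [coordSeries, coeff_mk, hc]
    by_cases h1 : m ≤ d
    · rw [if_pos (by omega), if_pos h1, if_neg (by omega)]; norm_num
    · by_cases h2 : m = d + 1
      · rw [if_pos (by omega), if_neg (by omega), if_pos h2.symm]; norm_num
      · rw [if_neg (by omega), if_neg (by omega), if_neg (by omega)]; norm_num

lemma coordSeries_singleton (m : ℕ) :
    coordSeries ({(m : ℤ)} : Set ℤ) = PowerSeries.X ^ m := by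
  ext d
  rw [PowerSeries.coeff_X_pow]
  simp only [coordSeries, PowerSeries.coeff_mk]
  by_cases h : d = m
  · subst h
    rw [show {s ∈ ({(d : ℤ)} : Set ℤ) | s.natAbs = d} = {(d : ℤ)} by ext s; simp; omega,
      Set.ncard_singleton, if_pos rfl]
    norm_num
  · rw [show {s ∈ ({(m : ℤ)} : Set ℤ) | s.natAbs = d} = ∅ by ext s; simp; omega,
      Set.ncard_empty, if_neg h]
    norm_num

lemma part1 {n : ℕ} (A B : Finset (Fin n)) (hAB : ∀ j ∈ A, j ∉ B) (a : Fin n → ℤ)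
    (ha : ∀ j, 0 ≤ a j) (haA : ∀ j ∈ A, a j = 0) :
    hilbSeries {b | ∃ c ∈ SfMon A, (∀ j ∈ B, c j = 0) ∧ b = a + c} *
        (1 - PowerSeries.X) ^ (n - B.card)
      = (PowerSeries.X : PowerSeries ℚ) ^ (degAbs a) * (1 + PowerSeries.X) ^ A.card := by
  classical
  set S : Fin n → Set ℤ := fun i =>
    if i ∈ A then Set.univ else if i ∈ B then {a i} else Set.Ici (a i) with hS
  have hset : {b | ∃ c ∈ SfMon A, (∀ j ∈ B, c j = 0) ∧ b = a + c}
      = {b : Fin n → ℤ | ∀ i, b i ∈ S i} := by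
    ext b
    simp only [Set.mem_setOf_eq]
    constructor
    · rintro ⟨c, hc, hcB, rfl⟩ i
      by_cases hiA : i ∈ A
      · simp [hS, hiA]
      · by_cases hiB : i ∈ B
        · simp [hS, hiA, hiB, Pi.add_apply, hcB i hiB]
        · simp only [hS, hiA, hiB, if_false, Set.mem_Ici, Pi.add_apply]
          have := hc i hiA
          omega
    · intro hb
      refine ⟨b - a, ?_, ?_, by ring⟩
      · intro j hjA
        have := hb j
        by_cases hjB : j ∈ B
        · simp [hS, hjA, hjB] at this
          simp [this]
        · simp [hS, hjA, hjB, Set.mem_Ici] at this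
          simp only [Pi.sub_apply]
          omega
      · intro j hjB
        have hjA : j ∉ A := fun h => hAB j h hjB
        have := hb j
        simp [hS, hjA, hjB] at this
        simp [this]
  rw [hset, hilbSeries_box]
  have hBc : (1 - PowerSeries.X : PowerSeries ℚ) ^ (n - B.card)
      = ∏ i : Fin n, (if i ∈ B then 1 else (1 - PowerSeries.X)) := by
    rw [Finset.prod_ite, Finset.prod_const, Finset.prod_const, one_pow, one_mul]
    congr 1
    rw [show Finset.filter (fun x => x ∉ B) Finset.univ = Bᶜ by ext i; simp,
      Finset.card_compl, Fintype.card_fin]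
  rw [hBc, ← Finset.prod_mul_distrib]
  have hfac : ∀ i : Fin n,
      coordSeries (S i) * (if i ∈ B then 1 else (1 - PowerSeries.X))
        = if i ∈ A then (1 + PowerSeries.X) else (PowerSeries.X : PowerSeries ℚ) ^ (a i).natAbs := by
    intro i
    by_cases hiA : i ∈ A
    · rw [if_neg (hAB i hiA), if_pos hiA]
      simp only [hS, hiA, if_true]
      exact coordSeries_univ_mul
    · by_cases hiB : i ∈ B
      · rw [if_pos hiB, if_neg hiA, mul_one]
        simp only [hS, hiA, hiB, if_true, if_false]
        rw [show ({a i} : Set ℤ) = {((a i).natAbs : ℤ)} by rw [Int.natAbs_of_nonneg (ha i)]]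
        exact coordSeries_singleton _
      · rw [if_neg hiB, if_neg hiA]
        simp only [hS, hiA, hiB, if_false]
        rw [show Set.Ici (a i) = Set.Ici (((a i).natAbs : ℤ)) by
          rw [Int.natAbs_of_nonneg (ha i)]]
        exact coordSeries_Ici_mul _
  rw [Finset.prod_congr rfl (fun i _ => hfac i), Finset.prod_ite, Finset.prod_const,
    Finset.prod_pow_eq_pow_sum]
  have h1 : (Finset.univ.filter (· ∈ A)).card = A.card := by
    congr 1; ext i; simp
  have h2 : ∑ i ∈ Finset.univ.filter (· ∉ A), (a i).natAbs = degAbs a := by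
    rw [degAbs]
    apply Finset.sum_subset (Finset.filter_subset _ _)
    intro i _ hi
    simp only [Finset.mem_filter, Finset.mem_univ, true_and, not_not] at hi
    simp [haA i hi]
  rw [h1, h2, mul_comm]


lemma hilbSeries_sum {n r : ℕ} (F : Fin r → Set (Fin n → ℤ))
    (hd : ∀ i j : Fin r, i ≠ j → Disjoint (F i) (F j)) :
    hilbSeries (⋃ i, F i) = ∑ i, hilbSeries (F i) := by
  ext d
  rw [map_sum]
  simp only [hilbSeries, PowerSeries.coeff_mk]
  rw [← Nat.cast_sum]
  congr 1
  rw [show {a ∈ ⋃ i, F i | degAbs a = d} = ⋃ i ∈ Finset.univ, {a ∈ F i | degAbs a = d} by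
    ext x
    simp only [Set.mem_setOf_eq, Set.mem_iUnion, Finset.mem_univ, Set.iUnion_true]
    tauto]
  rw [ncard_biUnion' _ _ (fun i _ => finite_mSlice _ d)]
  intro i _ j _ hij
  exact Set.disjoint_of_subset (fun x h => h.1) (fun x h => h.1) (hd i j hij)

lemma chain_mono {n r : ℕ} (N : Fin (r + 1) → Set (Fin n → ℤ))
    (hssub : ∀ i : Fin r, N i.castSucc ⊂ N i.succ) :
    ∀ (p q : ℕ) (hpq : p ≤ q) (hq : q ≤ r), N ⟨p, by omega⟩ ⊆ N ⟨q, by omega⟩ := by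
  intro p q
  induction q with
  | zero =>
    intro hpq _
    have : p = 0 := by omega
    subst this; exact subset_rfl
  | succ m ih =>
    intro hpq hq
    rcases Nat.lt_or_ge p (m + 1) with h | h
    · refine (ih (by omega) (by omega)).trans ?_
      exact (hssub ⟨m, by omega⟩).subset
    · have : p = m + 1 := by omega
      subst this; exact subset_rfl

lemma filtration_disjoint {n r : ℕ} (N : Fin (r + 1) → Set (Fin n → ℤ))
    (hssub : ∀ i : Fin r, N i.castSucc ⊂ N i.succ) (i j : Fin r) (hij : i ≠ j) :
    Disjoint (N i.succ \ N i.castSucc) (N j.succ \ N j.castSucc) := by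
  wlog h : (i : ℕ) < j generalizing i j
  · exact (this j i hij.symm (by
      have hi := i.isLt; have hj := j.isLt
      have : (i : ℕ) ≠ (j : ℕ) := fun hc => hij (Fin.ext hc)
      omega)).symm
  rw [Set.disjoint_left]
  rintro b ⟨hb1, -⟩ ⟨-, hb2⟩
  have hj := j.isLt
  exact hb2 (chain_mono N hssub ((i : ℕ) + 1) (j : ℕ) (by omega) (by omega) hb1)

lemma filtration_union {n r : ℕ} (N : Fin (r + 1) → Set (Fin n → ℤ))
    (hssub : ∀ i : Fin r, N i.castSucc ⊂ N i.succ) :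
    N (Fin.last r) \ N 0 = ⋃ i : Fin r, (N i.succ \ N i.castSucc) := by
  have h0 : (0 : Fin (r + 1)) = ⟨0, by omega⟩ := rfl
  ext b
  simp only [Set.mem_diff, Set.mem_iUnion]
  constructor
  · rintro ⟨hbI, hbJ⟩
    have key : ∀ k : ℕ, ∀ hk : k ≤ r, b ∈ N ⟨k, by omega⟩ →
        ∃ i : Fin r, b ∈ N i.succ ∧ b ∉ N i.castSucc := by
      intro k
      induction k with
      | zero =>
        intro _ h
        rw [← h0] at h
        exact absurd h hbJ
      | succ m ih =>
        intro hk h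
        by_cases hm : b ∈ N ⟨m, by omega⟩
        · exact ih (by omega) hm
        · exact ⟨⟨m, by omega⟩, h, hm⟩
    exact key r le_rfl hbI
  · rintro ⟨i, hb1, hb2⟩
    have hi := i.isLt
    refine ⟨chain_mono N hssub ((i : ℕ) + 1) r (by omega) le_rfl hb1, fun hb0 => ?_⟩
    rw [h0] at hb0
    exact hb2 (chain_mono N hssub 0 (i : ℕ) (by omega) (by omega) hb0)

lemma exists_minimal_prime {n : ℕ} (Q : Set (Fin n → ℤ)) (B : Finset (Fin n)) :
    primeContainsIdeal B Q →
      ∃ B' ⊆ B, primeContainsIdeal B' Q ∧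
        ∀ B'' ⊆ B', primeContainsIdeal B'' Q → B'' = B' := by
  classical
  induction B using Finset.strongInductionOn with
  | _ B ih =>
    intro hB
    by_cases h : ∀ B'' ⊆ B, primeContainsIdeal B'' Q → B'' = B
    · exact ⟨B, subset_rfl, hB, h⟩
    · push_neg at h
      obtain ⟨B'', hsub, hB'', hne⟩ := h
      obtain ⟨B', h1, h2, h3⟩ := ih B'' (Finset.ssubset_iff_subset_ne.mpr ⟨hsub, hne⟩) hB''
      exact ⟨B', h1.trans hsub, h2, h3⟩


/-- (1) For a monomial prime `P = P_B·S_f` of `S_f` with `f ∉ P` (i.e. `B ∩ A = ∅`) and a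
shift `a ∈ ℕⁿ` with `a j = 0` for `j ∈ A`, the Hilbert series of `(S_f/P)(-a)` satisfies
`H(t) = Q(t)(1+t)^{|A|}/(1-t)^{d'}` with `d' = dim S_f/P = n - |B|` and `Q(1) = 1`.
(2) Consequently, for monomial ideals `J ⊂ I ⊂ S_f` and any prime filtration of `I/J` as
above, `H_{I/J}(t) = Q̃(t)/(1-t)^d` with `d = dim I/J` (the maximum of `dim S_f/P'` over
the minimal primes `P'` of `I/J`) and `Q̃(1) = k·2^{|A|}`, where `k` is the number of
filtration factors `(S_f/P_i)(-a_i)` with `dim S_f/P_i = d`. -/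
theorem hilbert_series_prime_filtration {n : ℕ} (A : Finset (Fin n)) :
    (∀ B : Finset (Fin n), (∀ j ∈ A, j ∉ B) →
      ∀ a : Fin n → ℤ, (∀ j, 0 ≤ a j) → (∀ j ∈ A, a j = 0) →
      ∃ Q : Polynomial ℚ,
        hilbSeries {b | ∃ c ∈ SfMon A, (∀ j ∈ B, c j = 0) ∧ b = a + c} *
            (1 - PowerSeries.X) ^ (n - B.card) =
          (Q : PowerSeries ℚ) * (1 + PowerSeries.X) ^ A.card ∧
        Q.eval 1 = 1) ∧
    ∀ I J : Set (Fin n → ℤ), IsMonomialIdeal A I → IsMonomialIdeal A J → J ⊂ I →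
      ∀ (r : ℕ) (N : Fin (r + 1) → Set (Fin n → ℤ)) (B : Fin r → Finset (Fin n))
        (a : Fin r → Fin n → ℤ), IsPrimeFiltration A J I r N B a →
        ∀ d : ℕ,
          d = sSup {m : ℕ | ∃ B' : Finset (Fin n),
              IsMinimalPrimeOf A B' I J ∧ m = n - B'.card} →
          ∃ Q : Polynomial ℚ,
            hilbSeries (I \ J) * (1 - PowerSeries.X) ^ d = (Q : PowerSeries ℚ) ∧
            Q.eval 1 =
              ((Finset.univ.filter fun i : Fin r => n - (B i).card = d).card : ℚ) *
                2 ^ A.card := by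
  constructor
  · intro B hAB a ha haA
    refine ⟨Polynomial.X ^ degAbs a, ?_, by simp⟩
    rw [part1 A B hAB a ha haA, Polynomial.coe_pow, Polynomial.coe_X]
  · intro I J hI hJ hJI r Nfilt B a hPF d hd
    obtain ⟨h0, hlast, hmon, hssub, hBA, ha0, haA2, hfac⟩ := hPF
    have hdge : ∀ i : Fin r, n - (B i).card ≤ d := by
      intro i
      have hi := i.isLt
      have hcol : primeContainsIdeal (B i) (colonSet A I J) := by
        intro c hc
        by_contra hcon
        push_neg at hcon
        have hcB : ∀ j ∈ B i, c j = 0 := by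
          intro j hj
          have hjA : j ∉ A := fun h => hBA i j h hj
          have h1 := hc.1 j hjA
          have h2 := hcon j hj
          omega
        have haiI : a i ∈ I := by
          have hmem : a i ∈ Nfilt i.succ \ Nfilt i.castSucc := by
            rw [hfac i]
            exact ⟨0, fun j _ => le_rfl, fun j _ => rfl, by simp⟩
          rw [← hlast]
          exact chain_mono Nfilt hssub ((i : ℕ) + 1) r (by omega) le_rfl hmem.1
        have hJmem : a i + c ∈ J := hc.2 (a i) haiI
        have h1 : a i + c ∈ Nfilt i.succ \ Nfilt i.castSucc := by
          rw [hfac i]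
          exact ⟨c, hc.1, hcB, rfl⟩
        have h2 : a i + c ∈ Nfilt i.castSucc := by
          have h0fin : (0 : Fin (r + 1)) = ⟨0, by omega⟩ := rfl
          have := chain_mono Nfilt hssub 0 (i : ℕ) (by omega) (by omega)
          rw [← h0fin] at this
          exact this (h0 ▸ hJmem)
        exact h1.2 h2
      obtain ⟨B', hB'sub, hB'p, hB'min⟩ := exists_minimal_prime _ (B i) hcol
      have hmem : (n - B'.card) ∈ {m : ℕ | ∃ B'' : Finset (Fin n),
          IsMinimalPrimeOf A B'' I J ∧ m = n - B''.card} :=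
        ⟨B', ⟨fun j hj hjB' => hBA i j hj (hB'sub hjB'), hB'p, hB'min⟩, rfl⟩
      have hbdd : BddAbove {m : ℕ | ∃ B'' : Finset (Fin n),
          IsMinimalPrimeOf A B'' I J ∧ m = n - B''.card} := by
        refine ⟨n, ?_⟩
        rintro m ⟨B'', -, rfl⟩
        omega
      calc n - (B i).card ≤ n - B'.card :=
            Nat.sub_le_sub_left (Finset.card_le_card hB'sub) n
        _ ≤ d := hd ▸ le_csSup hbdd hmem
    have hunion : I \ J = ⋃ i : Fin r, (Nfilt i.succ \ Nfilt i.castSucc) := by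
      rw [← hlast, ← h0]
      exact filtration_union Nfilt hssub
    set e : Fin r → ℕ := fun i => d - (n - (B i).card) with he
    refine ⟨∑ i : Fin r, Polynomial.X ^ degAbs (a i) * (1 + Polynomial.X) ^ A.card *
        (1 - Polynomial.X) ^ e i, ?_, ?_⟩
    · have hcoe : ((∑ i : Fin r, Polynomial.X ^ degAbs (a i) *
          (1 + Polynomial.X) ^ A.card * (1 - Polynomial.X) ^ e i : Polynomial ℚ) :
            PowerSeries ℚ)
          = ∑ i : Fin r, (PowerSeries.X : PowerSeries ℚ) ^ degAbs (a i) *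
              (1 + PowerSeries.X) ^ A.card * (1 - PowerSeries.X) ^ e i := by
        rw [← Polynomial.coeToPowerSeries.ringHom_apply, map_sum]
        refine Finset.sum_congr rfl fun i _ => ?_
        simp only [map_mul, map_pow, map_sub, map_add, map_one,
          Polynomial.coeToPowerSeries.ringHom_apply, Polynomial.coe_X]
      rw [hcoe, hunion, hilbSeries_sum _ (filtration_disjoint Nfilt hssub), Finset.sum_mul]
      refine Finset.sum_congr rfl fun i _ => ?_
      rw [show d = (n - (B i).card) + e i by have := hdge i; simp only [he]; omega,
        pow_add, ← mul_assoc, hfac i, part1 A (B i) (fun j hj => hBA i j hj) (a i)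
          (ha0 i) (haA2 i)]
    · rw [Polynomial.eval_finset_sum]
      simp only [Polynomial.eval_mul, Polynomial.eval_pow, Polynomial.eval_add,
        Polynomial.eval_sub, Polynomial.eval_one, Polynomial.eval_X, one_pow, one_mul]
      norm_num
      have : ∀ i : Fin r, ((0 : ℚ)) ^ (e i) = if n - (B i).card = d then 1 else 0 := by
        intro i
        have := hdge i
        by_cases h : n - (B i).card = d
        · rw [if_pos h, show e i = 0 by simp only [he]; omega, pow_zero]
        · rw [if_neg h, zero_pow (by simp only [he]; omega)]
      rw [Finset.sum_congr rfl fun i _ => by rw [this i]]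
      rw [show (∑ i : Fin r, 2 ^ A.card * if n - (B i).card = d then (1:ℚ) else 0)
          = ∑ i : Fin r, (if n - (B i).card = d then (2:ℚ) ^ A.card else 0) from
        Finset.sum_congr rfl fun i _ => by split <;> simp,
        ← Finset.sum_filter, Finset.sum_const, nsmul_eq_mul]
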